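/- Let H be a complex inner product space and V a complex vector space. Let f be a map assigning to every pair (ψ,φ) of unit vectors of H an element f(ψ,φ) ∈ V, and suppose that for all unit vectors ψ, φ and all c₁, c₂ ∈ ℂ such that c₁ψ + c₂φ is again a unit vector, f(c₁ψ+c₂φ, c₁ψ+c₂φ) = |c₁|² f(ψ,ψ) + |c₂|² f(φ,φ) + conj(c₁)c₂ f(ψ,φ) + c₁ conj(c₂) f(φ,ψ). Then there exists a unique map B : H × H → V that is conjugate-linear in the first argument, linear in the second argument, and satisfies B(ψ,φ) = f(ψ,φ) for all unit vectors ψ, φ. -/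

import Mathlib

open scoped ComplexConjugate

namespace PhaseSesqAux

open Complex

variable {H V : Type*} [NormedAddCommGroup H] [InnerProductSpace ℂ H]
  [AddCommGroup V] [Module ℂ V]

noncomputable def nz (x : H) : H := ((‖x‖ : ℂ))⁻¹ • x

lemma norm_nz {x : H} (hx : x ≠ 0) : ‖nz x‖ = 1 := by
  have h : ‖x‖ ≠ 0 := norm_ne_zero_iff.mpr hx
  simp [nz, norm_smul, h]

lemma nz_unit {x : H} (hx : ‖x‖ = 1) : nz x = x := by
  simp [nz, hx]

lemma smul_nz {x : H} (hx : x ≠ 0) : ((‖x‖ : ℝ) : ℂ) • nz x = x := by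
  have h : (‖x‖ : ℂ) ≠ 0 := by
    simpa using norm_ne_zero_iff.mpr hx
  rw [nz, smul_smul, mul_inv_cancel₀ h, one_smul]

lemma nz_smul {x : H} (hx : x ≠ 0) {c : ℂ} (hc : c ≠ 0) :
    nz (c • x) = (c * (‖c‖ : ℂ)⁻¹) • nz x := by
  have h : ‖x‖ ≠ 0 := norm_ne_zero_iff.mpr hx
  have hc' : ‖c‖ ≠ 0 := norm_ne_zero_iff.mpr hc
  rw [nz, nz, norm_smul, smul_smul, smul_smul]
  congr 1
  push_cast
  field_simp

section
variable (f : H → H → V)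

def IC (f : H → H → V) : Prop :=
  ∀ ψ φ : H, ‖ψ‖ = 1 → ‖φ‖ = 1 → ∀ c₁ c₂ : ℂ, ‖c₁ • ψ + c₂ • φ‖ = 1 →
      f (c₁ • ψ + c₂ • φ) (c₁ • ψ + c₂ • φ)
        = ((‖c₁‖ ^ 2 : ℝ) : ℂ) • f ψ ψ + ((‖c₂‖ ^ 2 : ℝ) : ℂ) • f φ φ
          + (conj c₁ * c₂) • f ψ φ + (c₁ * conj c₂) • f φ ψ

lemma diag_phase (hf : IC f) {ψ : H} (hψ : ‖ψ‖ = 1) {u : ℂ} (hu : ‖u‖ = 1) :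
    f (u • ψ) (u • ψ) = f ψ ψ := by
  have h := hf ψ ψ hψ hψ u 0 (by simp [norm_smul, hu, hψ])
  simpa [hu] using h

lemma cross_phase (hf : IC f) {ψ : H} (hψ : ‖ψ‖ = 1) {u : ℂ} (hu : ‖u‖ = 1) :
    (conj u) • f ψ (u • ψ) + u • f (u • ψ) ψ = (2 : ℂ) • f ψ ψ := by
  have huu : conj u * u = 1 := by
    rw [mul_comm, Complex.mul_conj]
    norm_cast
    rw [Complex.normSq_eq_norm_sq, hu, one_pow]
  have hcombo : (2⁻¹ : ℂ) • ψ + ((2⁻¹ : ℂ) * conj u) • (u • ψ) = ψ := by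
    rw [smul_smul, ← add_smul, mul_assoc, huu, mul_one]
    norm_num
  have h := hf ψ (u • ψ) hψ (by simp [norm_smul, hu, hψ]) 2⁻¹ (2⁻¹ * conj u)
    (by rw [hcombo, hψ])
  rw [hcombo, diag_phase f hf hψ hu] at h
  have hn : ‖(2⁻¹ : ℂ)‖ = 2⁻¹ := by norm_num
  have hn2 : ‖(2⁻¹ : ℂ) * conj u‖ = 2⁻¹ := by
    rw [norm_mul, hn, RCLike.norm_conj, hu, mul_one]
  rw [hn, hn2] at h
  simp only [map_mul, RingHomCompTriple.comp_apply, Complex.conj_conj, map_inv₀, map_ofNat, RingHom.id_apply] at h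
  push_cast at h
  linear_combination (norm := module) (-4 : ℂ) • h


noncomputable def Q (f : H → H → V) (x : H) : V :=
  (((‖x‖ : ℝ) : ℂ) ^ 2) • f (nz x) (nz x)

noncomputable def B0 (f : H → H → V) (x y : H) : V :=
  (((‖x‖ : ℝ) : ℂ) * ((‖y‖ : ℝ) : ℂ)) • f (nz x) (nz y)

@[simp] lemma Q_zero : Q f (0 : H) = 0 := by simp [Q]
@[simp] lemma B0_zero_left (y : H) : B0 f 0 y = 0 := by simp [B0]
@[simp] lemma B0_zero_right (x : H) : B0 f x 0 = 0 := by simp [B0]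

lemma Q_unit {ψ : H} (hψ : ‖ψ‖ = 1) : Q f ψ = f ψ ψ := by
  simp [Q, hψ, nz_unit]

lemma B0_unit {ψ φ : H} (hψ : ‖ψ‖ = 1) (hφ : ‖φ‖ = 1) : B0 f ψ φ = f ψ φ := by
  simp [B0, hψ, hφ, nz_unit]

lemma Q_smul (hf : IC f) (c : ℂ) (x : H) :
    Q f (c • x) = ((‖c‖ : ℂ) ^ 2) • Q f x := by
  rcases eq_or_ne x 0 with rfl | hx
  · simp
  rcases eq_or_ne c 0 with rfl | hc
  · simp
  have hu : ‖c * (‖c‖ : ℂ)⁻¹‖ = 1 := by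
    have habs : ‖c‖ ≠ 0 := by
      simpa using norm_ne_zero_iff.mpr hc
    simp [norm_mul, mul_inv_cancel₀ habs]
  rw [Q, Q, nz_smul hx hc, diag_phase f hf (norm_nz hx) hu, norm_smul, smul_smul]
  congr 1
  push_cast
  ring

lemma master (hf : IC f) (x y : H) (c : ℂ) :
    Q f (x + c • y)
      = Q f x + ((‖c‖ : ℂ) ^ 2) • Q f y + c • B0 f x y + (conj c) • B0 f y x := by
  rcases eq_or_ne x 0 with rfl | hx
  · simp [Q_smul f hf]
  rcases eq_or_ne y 0 with rfl | hy
  · simp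
  rcases eq_or_ne c 0 with rfl | hc
  · simp
  have ha0 : ((‖x‖ : ℝ) : ℂ) ≠ 0 := by simpa using norm_ne_zero_iff.mpr hx
  have hb0 : ((‖y‖ : ℝ) : ℂ) ≠ 0 := by simpa using norm_ne_zero_iff.mpr hy
  rcases eq_or_ne (x + c • y) 0 with h0 | hne
  · -- degenerate case: x + c • y = 0
    have hcy : c • y = -x := by linear_combination (norm := module) h0
    have hby : (c * (‖y‖ : ℂ)) • nz y = (-(‖x‖ : ℂ)) • nz x := by
      have e1 : (c * (‖y‖ : ℂ)) • nz y = c • y := by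
        rw [← smul_smul, smul_nz hy]
      have e2 : (-(‖x‖ : ℂ)) • nz x = -x := by
        rw [neg_smul, smul_nz hx]
      rw [e1, e2, hcy]
    have hnormcb : ‖c‖ * ‖y‖ = ‖x‖ := by
      have := congrArg norm hcy
      simpa [norm_smul] using this
    have hcb : (c * (‖y‖ : ℂ)) ≠ 0 := mul_ne_zero hc hb0
    set u : ℂ := -(‖x‖ : ℂ) * (c * (‖y‖ : ℂ))⁻¹ with hudef
    have hu : ‖u‖ = 1 := by
      have hne0 : ‖c‖ * ‖y‖ ≠ 0 := by
        rw [hnormcb]; exact norm_ne_zero_iff.mpr hx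
      rw [hudef, norm_mul, norm_neg, norm_inv, norm_mul, Complex.norm_real,
        Complex.norm_real, norm_norm, norm_norm, ← hnormcb]
      exact mul_inv_cancel₀ hne0
    have hnzy : nz y = u • nz x := by
      rw [hudef, mul_comm, ← smul_smul, ← hby, smul_smul, inv_mul_cancel₀ hcb, one_smul]
    have huconj : u * conj u = 1 := by
      rw [Complex.mul_conj]
      norm_cast
      rw [Complex.normSq_eq_norm_sq, hu, one_pow]
    have hcbu : c * (‖y‖ : ℂ) = -(‖x‖ : ℂ) * conj u := by
      have hconj : conj u = u⁻¹ := (inv_eq_of_mul_eq_one_right huconj).symm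
      rw [hconj, hudef]
      field_simp
    have hcbu' : conj c * (‖y‖ : ℂ) = -(‖x‖ : ℂ) * u := by
      have := congrArg conj hcbu
      simpa [map_mul, Complex.conj_ofReal, Complex.conj_conj] using this
    have cross := cross_phase f hf (norm_nz hx) hu
    have hacb : ((‖c‖ : ℂ)) * (‖y‖ : ℂ) = (‖x‖ : ℂ) := by
      norm_cast
    rw [h0, Q_zero, Q, Q, B0, B0, hnzy, diag_phase f hf (norm_nz hx) hu]
    rw [smul_smul, smul_smul, smul_smul]
    have e1 : ((‖c‖ : ℂ)) ^ 2 * ((‖y‖ : ℝ) : ℂ) ^ 2 = ((‖x‖ : ℝ) : ℂ) ^ 2 := by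
      linear_combination (((‖c‖ : ℂ)) * (‖y‖ : ℂ) + (‖x‖ : ℂ)) * hacb
    have e2 : c * (((‖x‖ : ℝ) : ℂ) * ((‖y‖ : ℝ) : ℂ))
        = -(((‖x‖ : ℝ) : ℂ) ^ 2) * conj u := by
      linear_combination ((‖x‖ : ℂ)) * hcbu
    have e3 : conj c * (((‖y‖ : ℝ) : ℂ) * ((‖x‖ : ℝ) : ℂ))
        = -(((‖x‖ : ℝ) : ℂ) ^ 2) * u := by
      linear_combination ((‖x‖ : ℂ)) * hcbu'
    rw [e2, e3, e1]
    linear_combination (norm := module) (((‖x‖ : ℝ) : ℂ) ^ 2) • cross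
  · -- main case
    have ht0 : ((‖x + c • y‖ : ℝ) : ℂ) ≠ 0 := by simpa using norm_ne_zero_iff.mpr hne
    have h1 : ((‖x‖ : ℂ) * ((‖x + c • y‖ : ℝ) : ℂ)⁻¹) • nz x
        = ((‖x + c • y‖ : ℝ) : ℂ)⁻¹ • x := by
      rw [mul_comm, ← smul_smul, smul_nz hx]
    have h2 : (c * (‖y‖ : ℂ) * ((‖x + c • y‖ : ℝ) : ℂ)⁻¹) • nz y
        = ((‖x + c • y‖ : ℝ) : ℂ)⁻¹ • (c • y) := by
      rw [show c * (‖y‖ : ℂ) * ((‖x + c • y‖ : ℝ) : ℂ)⁻¹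
          = ((‖x + c • y‖ : ℝ) : ℂ)⁻¹ * c * (‖y‖ : ℂ) by ring]
      rw [← smul_smul, ← smul_smul, smul_nz hy]
    have hcombo : ((‖x‖ : ℂ) * ((‖x + c • y‖ : ℝ) : ℂ)⁻¹) • nz x
        + (c * (‖y‖ : ℂ) * ((‖x + c • y‖ : ℝ) : ℂ)⁻¹) • nz y = nz (x + c • y) := by
      rw [h1, h2, ← smul_add, nz]
    have h := hf (nz x) (nz y) (norm_nz hx) (norm_nz hy)
      ((‖x‖ : ℂ) * ((‖x + c • y‖ : ℝ) : ℂ)⁻¹) (c * (‖y‖ : ℂ) * ((‖x + c • y‖ : ℝ) : ℂ)⁻¹)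
      (by rw [hcombo]; exact norm_nz hne)
    rw [hcombo] at h
    have hna : ‖(‖x‖ : ℂ) * ((‖x + c • y‖ : ℝ) : ℂ)⁻¹‖ = ‖x‖ * ‖x + c • y‖⁻¹ := by
      rw [norm_mul, norm_inv, Complex.norm_real, Complex.norm_real, norm_norm, norm_norm]
    have hnc : ‖c * (‖y‖ : ℂ) * ((‖x + c • y‖ : ℝ) : ℂ)⁻¹‖
        = ‖c‖ * ‖y‖ * ‖x + c • y‖⁻¹ := by
      rw [norm_mul, norm_mul, norm_inv, Complex.norm_real, Complex.norm_real,
        norm_norm, norm_norm]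
    rw [hna, hnc] at h
    simp only [map_mul, map_inv₀, Complex.conj_ofReal] at h
    rw [Q, h, Q, Q, B0, B0]
    push_cast
    match_scalars <;> field_simp <;> ring

lemma smul_I_cancel {v w : V} (h : Complex.I • v = Complex.I • w) : v = w := by
  have h2 := congrArg (fun z : V => (-Complex.I) • z) h
  simpa only [smul_smul, neg_mul, Complex.I_mul_I, neg_neg, one_smul] using h2

noncomputable def S (f : H → H → V) (x y : H) : V := Q f (x + y) - Q f x - Q f y

lemma S_eq (hf : IC f) (x y : H) : S f x y = B0 f x y + B0 f y x := by
  have h := master f hf x y 1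
  simp only [one_smul, norm_one, Complex.ofReal_one, one_pow, map_one] at h
  rw [S, h]
  abel

lemma parallelogram (hf : IC f) (x y : H) :
    Q f (x + y) + Q f (x - y) = Q f x + Q f x + (Q f y + Q f y) := by
  have h1 := master f hf x y 1
  have h2 := master f hf x y (-1)
  simp only [one_smul, neg_smul, norm_one, norm_neg, Complex.ofReal_one, one_pow,
    map_one, map_neg, neg_neg] at h1 h2
  rw [sub_eq_add_neg]
  linear_combination (norm := module) h1 + h2

lemma S_jvn (hf : IC f) (x y z : H) :
    S f (x + y) z + S f (x - y) z = S f x z + S f x z := by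
  have p1 := parallelogram f hf (x + z) y
  have p2 := parallelogram f hf x y
  simp only [S]
  rw [show x + y + z = x + z + y by abel, show x - y + z = x + z - y by abel]
  linear_combination (norm := module) p1 - p2

lemma S_zero_left (z : H) : S f 0 z = 0 := by simp [S]

lemma S_add_left (hf : IC f) (a b z : H) : S f (a + b) z = S f a z + S f b z := by
  have h2 := S_jvn f hf ((2⁻¹ : ℂ) • (a + b)) ((2⁻¹ : ℂ) • (a - b)) z
  have hx : (2⁻¹ : ℂ) • (a + b) + (2⁻¹ : ℂ) • (a - b) = a := by module
  have hy : (2⁻¹ : ℂ) • (a + b) - (2⁻¹ : ℂ) • (a - b) = b := by module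
  rw [hx, hy] at h2
  have h3 := S_jvn f hf ((2⁻¹ : ℂ) • (a + b)) ((2⁻¹ : ℂ) • (a + b)) z
  have hx2 : (2⁻¹ : ℂ) • (a + b) + (2⁻¹ : ℂ) • (a + b) = a + b := by module
  rw [hx2, sub_self, S_zero_left] at h3
  linear_combination (norm := module) h3 - h2

lemma S_comm (x y : H) : S f x y = S f y x := by
  rw [S, S, add_comm x y]
  abel

lemma S_add_right (hf : IC f) (x a b : H) : S f x (a + b) = S f x a + S f x b := by
  rw [S_comm, S_add_left f hf, S_comm f a x, S_comm f b x]

lemma B0_smul_pair (hf : IC f) (x y : H) (c : ℂ) :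
    B0 f x (c • y) = c • B0 f x y ∧ B0 f (c • y) x = conj c • B0 f y x := by
  have hA1 := master f hf x (c • y) 1
  have hA2 := master f hf x y c
  have hQc := Q_smul f hf c y
  simp only [one_smul, norm_one, Complex.ofReal_one, one_pow, map_one] at hA1
  have hB1 := master f hf x (c • y) Complex.I
  have hB2 := master f hf x y (Complex.I * c)
  rw [smul_smul] at hB1
  simp only [Complex.norm_I, Complex.ofReal_one, one_pow, one_smul, Complex.conj_I,
    norm_mul, one_mul, map_mul] at hB1 hB2
  have E1 : B0 f x (c • y) + B0 f (c • y) x = c • B0 f x y + conj c • B0 f y x := by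
    linear_combination (norm := module) -hA1 + hA2 - hQc
  have E2 : B0 f x (c • y) - B0 f (c • y) x = c • B0 f x y - conj c • B0 f y x := by
    apply smul_I_cancel
    linear_combination (norm := module) -hB1 + hB2 - hQc
  constructor
  · linear_combination (norm := module) (2⁻¹ : ℂ) • E1 + (2⁻¹ : ℂ) • E2
  · linear_combination (norm := module) (2⁻¹ : ℂ) • E1 - (2⁻¹ : ℂ) • E2

lemma B0_smul_right (hf : IC f) (c : ℂ) (x y : H) : B0 f x (c • y) = c • B0 f x y :=
  (B0_smul_pair f hf x y c).1

lemma B0_smul_left (hf : IC f) (c : ℂ) (x y : H) : B0 f (c • y) x = conj c • B0 f y x :=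
  (B0_smul_pair f hf x y c).2

lemma B0_add_left (hf : IC f) (a b y : H) :
    B0 f (a + b) y = B0 f a y + B0 f b y := by
  have G1 : B0 f (a + b) y + B0 f y (a + b)
      = B0 f a y + B0 f y a + (B0 f b y + B0 f y b) := by
    have h := S_add_left f hf a b y
    rw [S_eq f hf, S_eq f hf, S_eq f hf] at h
    linear_combination (norm := module) h
  have h := S_add_left f hf (Complex.I • a) (Complex.I • b) y
  rw [← smul_add, S_eq f hf, S_eq f hf, S_eq f hf,
    B0_smul_left f hf, B0_smul_left f hf, B0_smul_left f hf,
    B0_smul_right f hf, B0_smul_right f hf, B0_smul_right f hf, Complex.conj_I] at h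
  have G2 : B0 f (a + b) y - B0 f y (a + b)
      = B0 f a y - B0 f y a + (B0 f b y - B0 f y b) := by
    apply smul_I_cancel
    linear_combination (norm := module) -h
  linear_combination (norm := module) (2⁻¹ : ℂ) • G1 + (2⁻¹ : ℂ) • G2

lemma B0_add_right (hf : IC f) (x a b : H) :
    B0 f x (a + b) = B0 f x a + B0 f x b := by
  have G1 : B0 f x (a + b) + B0 f (a + b) x
      = B0 f x a + B0 f a x + (B0 f x b + B0 f b x) := by
    have h := S_add_right f hf x a b
    rw [S_eq f hf, S_eq f hf, S_eq f hf] at h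
    linear_combination (norm := module) h
  have h := S_add_right f hf x (Complex.I • a) (Complex.I • b)
  rw [← smul_add, S_eq f hf, S_eq f hf, S_eq f hf,
    B0_smul_left f hf, B0_smul_left f hf, B0_smul_left f hf,
    B0_smul_right f hf, B0_smul_right f hf, B0_smul_right f hf, Complex.conj_I] at h
  have G2 : B0 f x (a + b) - B0 f (a + b) x
      = B0 f x a - B0 f a x + (B0 f x b - B0 f b x) := by
    apply smul_I_cancel
    linear_combination (norm := module) h
  linear_combination (norm := module) (2⁻¹ : ℂ) • G1 + (2⁻¹ : ℂ) • G2

end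

end PhaseSesqAux

/-- **Existence and uniqueness of the sesquilinear extension of a phase observable.**
Let `H` be a complex inner product space and `V` a complex vector space.  If a map
`f` assigning to each pair of unit vectors of `H` an element of `V` satisfies the
interference condition
`f(c₁ψ+c₂φ, c₁ψ+c₂φ) = |c₁|² f(ψ,ψ) + |c₂|² f(φ,φ) + conj(c₁)c₂ f(ψ,φ) + c₁ conj(c₂) f(φ,ψ)`
whenever `ψ`, `φ` and `c₁ψ+c₂φ` are unit vectors, then there is a unique map
`B : H × H → V`, conjugate-linear in the first argument and linear in the second,
agreeing with `f` on pairs of unit vectors. -/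
theorem phase_observable_sesquilinear_extension
    {H V : Type*} [NormedAddCommGroup H] [InnerProductSpace ℂ H]
    [AddCommGroup V] [Module ℂ V]
    (f : H → H → V)
    (hf : ∀ ψ φ : H, ‖ψ‖ = 1 → ‖φ‖ = 1 → ∀ c₁ c₂ : ℂ, ‖c₁ • ψ + c₂ • φ‖ = 1 →
      f (c₁ • ψ + c₂ • φ) (c₁ • ψ + c₂ • φ)
        = ((‖c₁‖ ^ 2 : ℝ) : ℂ) • f ψ ψ + ((‖c₂‖ ^ 2 : ℝ) : ℂ) • f φ φ
          + (conj c₁ * c₂) • f ψ φ + (c₁ * conj c₂) • f φ ψ) :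
    ∃! B : H → H → V,
      (∀ ψ ψ' φ : H, B (ψ + ψ') φ = B ψ φ + B ψ' φ) ∧
      (∀ (c : ℂ) (ψ φ : H), B (c • ψ) φ = (conj c) • B ψ φ) ∧
      (∀ ψ φ φ' : H, B ψ (φ + φ') = B ψ φ + B ψ φ') ∧
      (∀ (c : ℂ) (ψ φ : H), B ψ (c • φ) = c • B ψ φ) ∧
      (∀ ψ φ : H, ‖ψ‖ = 1 → ‖φ‖ = 1 → B ψ φ = f ψ φ) := by
  have hf' : PhaseSesqAux.IC f := hf
  refine ⟨PhaseSesqAux.B0 f,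
    ⟨fun ψ ψ' φ => PhaseSesqAux.B0_add_left f hf' ψ ψ' φ,
     fun c ψ φ => PhaseSesqAux.B0_smul_left f hf' c φ ψ,
     fun ψ φ φ' => PhaseSesqAux.B0_add_right f hf' ψ φ φ',
     fun c ψ φ => PhaseSesqAux.B0_smul_right f hf' c ψ φ,
     fun ψ φ hψ hφ => PhaseSesqAux.B0_unit f hψ hφ⟩, ?_⟩
  rintro B ⟨hadd1, hsmul1, hadd2, hsmul2, hunit⟩
  funext x y
  rcases eq_or_ne x 0 with rfl | hx
  · have hB0 : B 0 y = 0 := by simpa using hsmul1 0 0 y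
    simp [hB0, PhaseSesqAux.B0]
  rcases eq_or_ne y 0 with rfl | hy
  · have hB0 : B x 0 = 0 := by simpa using hsmul2 0 x 0
    simp [hB0, PhaseSesqAux.B0]
  have hx' : x = ((‖x‖ : ℝ) : ℂ) • PhaseSesqAux.nz x := (PhaseSesqAux.smul_nz hx).symm
  have hy' : y = ((‖y‖ : ℝ) : ℂ) • PhaseSesqAux.nz y := (PhaseSesqAux.smul_nz hy).symm
  conv_lhs => rw [hx', hy']
  rw [hsmul1, hsmul2,
    hunit _ _ (PhaseSesqAux.norm_nz hx) (PhaseSesqAux.norm_nz hy),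
    Complex.conj_ofReal, smul_smul]
  rfl
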